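/- Let L1 and L2 be non-increasing finite lists of positive integers with L1 ≤lex L2. Then cl(L1) ≤lex cl(L2). -/

import Mathlib

/-- Lexicographic order `≤lex` on lists of naturals (a proper prefix is smaller). -/
def lexLe : List ℕ → List ℕ → Bool
  | [], _ => true
  | _ :: _, [] => false
  | a :: l1, b :: l2 => a < b || (a == b && lexLe l1 l2)

/-- The list `(k, k-1, …, 1)`. -/
def countdown (k : ℕ) : List ℕ :=
  (List.range k).reverse.map (· + 1)

/-- A suffix is good when it is empty or `≥lex (k, k-1, …, 1)` where `k` is its
first element. -/
def goodSuffix (S : List ℕ) : Bool :=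
  S.isEmpty || lexLe (countdown (S.headD 0)) S

/-- The closure `cl(L)` of a non-increasing list `L`: the longest good suffix `L_s`
of `L` is replaced by the one-element list `(k + 1)` where `k` is the first element
of `L_s` (by `(1)` if `L_s` is empty). -/
def cl (L : List ℕ) : List ℕ :=
  let Ls := (L.tails.find? goodSuffix).getD []
  L.take (L.length - Ls.length) ++ [Ls.headD 0 + 1]

theorem lexLe_trans (a : List ℕ) : ∀ b c : List ℕ,
    lexLe a b = true → lexLe b c = true → lexLe a c = true := by
  induction a with
  | nil => intro b c _ _; rfl
  | cons x a' ih =>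
    intro b c hab hbc
    cases b with
    | nil => simp [lexLe] at hab
    | cons y b' =>
      cases c with
      | nil => simp [lexLe] at hbc
      | cons z c' =>
        simp only [lexLe, Bool.or_eq_true, Bool.and_eq_true, decide_eq_true_eq,
          beq_iff_eq] at hab hbc ⊢
        rcases hab with h | ⟨h, h'⟩ <;> rcases hbc with g | ⟨g, g'⟩
        · exact Or.inl (by omega)
        · exact Or.inl (by omega)
        · exact Or.inl (by omega)
        · exact Or.inr ⟨by omega, ih _ _ h' g'⟩

theorem find?_tails_exists (T : List ℕ) :
    ∃ Ls, T.tails.find? goodSuffix = some Ls ∧ Ls.length ≤ T.length := by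
  have hs : (T.tails.find? goodSuffix).isSome := by
    rw [List.find?_isSome]
    exact ⟨[], by simp, rfl⟩
  obtain ⟨Ls, hLs⟩ := Option.isSome_iff_exists.mp hs
  refine ⟨Ls, hLs, ?_⟩
  have hmem : Ls ∈ T.tails := List.mem_of_find?_eq_some hLs
  rw [List.mem_tails] at hmem
  exact hmem.length_le

theorem cl_cons (a : ℕ) (T : List ℕ) :
    cl (a :: T) = if goodSuffix (a :: T) then [a + 1] else a :: cl T := by
  by_cases hg : goodSuffix (a :: T) = true
  · simp [cl, List.tails_cons, List.find?, hg]
  · obtain ⟨Ls, hLs, hlen⟩ := find?_tails_exists T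
    have hfind : (a :: T).tails.find? goodSuffix = some Ls := by
      rw [List.tails_cons]
      rw [List.find?_cons_of_neg hg]
      exact hLs
    simp only [cl, hfind, hLs, Option.getD_some, List.length_cons]
    have : T.length + 1 - Ls.length = (T.length - Ls.length) + 1 := by omega
    rw [this, List.take_succ_cons, List.cons_append, if_neg hg]

theorem cl_nil : cl [] = [1] := rfl

/-- If `L1, L2` are non-increasing lists of positive integers with `L1 ≤lex L2`,
then `cl(L1) ≤lex cl(L2)`. -/
theorem stmt11 (L1 L2 : List ℕ)
    (h1 : L1.Pairwise (· ≥ ·)) (h2 : L2.Pairwise (· ≥ ·))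
    (hp1 : ∀ x ∈ L1, 0 < x) (hp2 : ∀ x ∈ L2, 0 < x)
    (h : lexLe L1 L2 = true) :
    lexLe (cl L1) (cl L2) = true := by
  clear h1 h2
  induction L1 generalizing L2 with
  | nil =>
    rw [cl_nil]
    cases L2 with
    | nil => rfl
    | cons b t2 =>
      have hb : 0 < b := hp2 b (by simp)
      rw [cl_cons]
      split
      · simp [lexLe]; omega
      · simp [lexLe]; omega
  | cons a t1 ih =>
    cases L2 with
    | nil => simp [lexLe] at h
    | cons b t2 =>
      simp only [lexLe, Bool.or_eq_true, Bool.and_eq_true, decide_eq_true_eq,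
        beq_iff_eq] at h
      rw [cl_cons, cl_cons]
      rcases h with hab | ⟨hab, ht⟩
      · -- a < b : all four combinations are easy head comparisons
        split <;> split <;> simp [lexLe] <;> omega
      · subst hab
        by_cases g1 : goodSuffix (a :: t1) = true <;>
          by_cases g2 : goodSuffix (a :: t2) = true
        · rw [if_pos g1, if_pos g2]; simp [lexLe]
        · -- impossible: goodness transfers along lexLe
          exfalso
          apply g2
          simp only [goodSuffix, List.isEmpty_cons, Bool.false_or, List.headD_cons] at g1 ⊢
          refine lexLe_trans _ (a :: t1) _ g1 ?_
          simp [lexLe, ht]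
        · rw [if_neg g1, if_pos g2]; simp [lexLe]
        · rw [if_neg g1, if_neg g2]
          simp only [lexLe, Bool.or_eq_true, Bool.and_eq_true, decide_eq_true_eq,
            beq_iff_eq]
          have := ih t2
            (fun x hx => hp1 x (List.mem_cons_of_mem _ hx))
            (fun x hx => hp2 x (List.mem_cons_of_mem _ hx)) ht
          exact Or.inr ⟨trivial, this⟩
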